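/- Let u be an arithmetic sequence with ratios b_n and x ∈ [0,1) with support S. Let k ∈ ℕ and L ⊆ ℕ infinite with ⋃_{j=0}^k (L+j) disjoint from S. If b_n → ∞ along n ∈ L + k, then ‖u_{n−1}x‖ → 0 along n ∈ L. -/

import Mathlib

open Filter

/-- Claim DDU(b): if `L` is infinite, `⋃_{j≤k}(L+j)` is disjoint from the support of `x`,
and `b_n → ∞` along `L + k`, then `‖u_{n-1} x‖ → 0` along `L`. -/
theorem stmt_13 (u b c : ℕ → ℕ) (x : ℝ)
    (hu0 : u 0 = 1) (humono : StrictMono u)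
    (hb : ∀ n, u (n + 1) = b (n + 1) * u n)
    (hx0 : 0 ≤ x) (hx1 : x < 1)
    (hc0 : c 0 = 0)
    (hsum : x = ∑' n : ℕ, (c (n + 1) : ℝ) / (u (n + 1) : ℝ))
    (hclt : ∀ n, c (n + 1) < b (n + 1))
    (hcinf : {n : ℕ | c (n + 1) + 1 < b (n + 1)}.Infinite)
    (k : ℕ) (L : Set ℕ) (hL : L.Infinite)
    (hdisj : ∀ n ∈ L, ∀ j ≤ k, c (n + j) = 0)
    (hdiv : Tendsto (fun n : ℕ => b (n + k)) (atTop ⊓ 𝓟 L) atTop) :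
    Tendsto (fun n : ℕ => |(u (n - 1) : ℝ) * x - (round ((u (n - 1) : ℝ) * x) : ℝ)|)
      (atTop ⊓ 𝓟 L) (nhds 0) := by
  have hu_pos : ∀ n, 0 < u n := fun n => by
    have := humono.monotone (Nat.zero_le n); omega
  have hb2 : ∀ n, 2 ≤ b (n + 1) := fun n => by
    have h1 := humono (Nat.lt_succ_self n)
    have h2 := hb n
    have h3 := hu_pos n
    nlinarith
  have hpow : ∀ n, 2 ^ n ≤ u n := by
    intro n
    induction n with
    | zero => simp [hu0]
    | succ n ih =>
      have := hb n
      have := hb2 n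
      calc 2 ^ (n + 1) = 2 * 2 ^ n := by ring
        _ ≤ b (n + 1) * u n := Nat.mul_le_mul (hb2 n) ih
        _ = u (n + 1) := (hb n).symm
  have hdvd : ∀ m n : ℕ, m ≤ n → u m ∣ u n := by
    intro m n hmn
    induction n with
    | zero => simpa [Nat.le_zero.mp hmn]
    | succ n ih =>
      rcases Nat.lt_or_ge m (n + 1) with h | h
      · exact (ih (by omega)).trans ⟨b (n + 1), by rw [hb n]; ring⟩
      · have : m = n + 1 := by omega
        simp [this]
  set f : ℕ → ℝ := fun i => (c (i + 1) : ℝ) / (u (i + 1) : ℝ) with hf_def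
  have hupos' : ∀ n, (0 : ℝ) < (u n : ℝ) := fun n => by exact_mod_cast hu_pos n
  have hf0 : ∀ i, 0 ≤ f i := fun i => div_nonneg (by positivity) (le_of_lt (hupos' _))
  have hfle : ∀ i, f i ≤ 1 / (u i : ℝ) - 1 / (u (i + 1) : ℝ) := by
    intro i
    have hc : (c (i + 1) : ℝ) ≤ (b (i + 1) : ℝ) - 1 := by
      have h := hclt i
      have : (c (i + 1) : ℝ) + 1 ≤ (b (i + 1) : ℝ) := by exact_mod_cast h
      linarith
    have hbu : (u (i + 1) : ℝ) = (b (i + 1) : ℝ) * (u i : ℝ) := by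
      exact_mod_cast hb i
    have hbpos : (0 : ℝ) < (b (i + 1) : ℝ) := by
      have := hb2 i; exact_mod_cast by omega
    have hb1 : (b (i + 1) : ℝ) / (u (i + 1) : ℝ) = 1 / (u i : ℝ) := by
      rw [hbu, div_mul_eq_div_div, div_self (ne_of_gt hbpos)]
    calc f i ≤ ((b (i + 1) : ℝ) - 1) / (u (i + 1) : ℝ) :=
          (div_le_div_iff_of_pos_right (hupos' (i + 1))).mpr hc
      _ = 1 / (u i : ℝ) - 1 / (u (i + 1) : ℝ) := by
          rw [sub_div, hb1]
  have hfgeo : ∀ i, f i ≤ (1 / 2 : ℝ) ^ i := by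
    intro i
    have h1 : (2 : ℝ) ^ i ≤ (u i : ℝ) := by exact_mod_cast hpow i
    have h2 : f i ≤ 1 / (u i : ℝ) := by
      have := hfle i
      have : (0 : ℝ) ≤ 1 / (u (i + 1) : ℝ) := by positivity
      linarith [hfle i]
    calc f i ≤ 1 / (u i : ℝ) := h2
      _ ≤ 1 / (2 : ℝ) ^ i := by
          apply one_div_le_one_div_of_le (by positivity) h1
      _ = (1 / 2 : ℝ) ^ i := by rw [div_pow, one_pow]
  have hsummable : Summable f :=
    Summable.of_nonneg_of_le hf0 hfgeo summable_geometric_two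
  -- tail bound
  have htail : ∀ m : ℕ, (∑' i, f (i + m)) ≤ 1 / (u m : ℝ) := by
    intro m
    apply Summable.tsum_le_of_sum_range_le ((summable_nat_add_iff m).mpr hsummable)
    intro N
    calc ∑ i ∈ Finset.range N, f (i + m)
        ≤ ∑ i ∈ Finset.range N, (1 / (u (m + i) : ℝ) - 1 / (u (m + i + 1) : ℝ)) := by
          apply Finset.sum_le_sum
          intro i _
          have := hfle (i + m)
          simpa [Nat.add_comm i m] using this
      _ = 1 / (u m : ℝ) - 1 / (u (m + N) : ℝ) := by
          have := Finset.sum_range_sub' (fun i => 1 / (u (m + i) : ℝ)) N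
          simpa [add_assoc] using this
      _ ≤ 1 / (u m : ℝ) := by
          have : (0 : ℝ) ≤ 1 / (u (m + N) : ℝ) := by positivity
          linarith
  -- the key eventual bound
  have key : ∀ᶠ n in atTop ⊓ 𝓟 L,
      |(u (n - 1) : ℝ) * x - (round ((u (n - 1) : ℝ) * x) : ℝ)| ≤ 1 / (b (n + k) : ℝ) := by
    rw [eventually_inf_principal]
    filter_upwards [eventually_ge_atTop 1] with n hn1 hnL
    set m := n - 1 with hm_def
    have hm : m + 1 = n := by omega
    -- split the sum
    have hsplit := Summable.sum_add_tsum_nat_add (f := f) (m + k + 1) hsummable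
    set T : ℝ := ∑' i, f (i + (m + k + 1)) with hT_def
    have hT0 : 0 ≤ T := tsum_nonneg (fun i => hf0 _)
    have hTle : T ≤ 1 / (u (m + k + 1) : ℝ) := htail (m + k + 1)
    -- integer part
    set A : ℕ := ∑ i ∈ Finset.range m, (u m / u (i + 1)) * c (i + 1) with hA_def
    have hA : (A : ℝ) = (u m : ℝ) * ∑ i ∈ Finset.range (m + k + 1), f i := by
      rw [Finset.mul_sum]
      rw [← Finset.sum_subset (Finset.range_subset_range.mpr (by omega : m ≤ m + k + 1))
        (fun i hit his => ?_)]
      · rw [hA_def]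
        push_cast
        apply Finset.sum_congr rfl
        intro i hi
        have him : i < m := Finset.mem_range.mp hi
        obtain ⟨d, hd⟩ := hdvd (i + 1) m (by omega)
        have hdiv : u m / u (i + 1) = d := by
          rw [hd]; exact Nat.mul_div_cancel_left d (hu_pos (i + 1))
        rw [hdiv]
        have : (u m : ℝ) = (u (i + 1) : ℝ) * (d : ℝ) := by exact_mod_cast hd
        rw [hf_def]
        dsimp only
        rw [this]
        have hne : ((u (i + 1) : ℕ) : ℝ) ≠ 0 := ne_of_gt (hupos' (i + 1))
        rw [mul_comm ((u (i + 1) : ℕ) : ℝ) (d : ℝ), mul_assoc, ← mul_div_assoc,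
          mul_comm ((u (i + 1) : ℕ) : ℝ) ((c (i + 1) : ℕ) : ℝ), mul_div_assoc,
          div_self hne, mul_one]
      · -- terms with m ≤ i < m + k + 1 vanish
        have him : m ≤ i := by simp only [Finset.mem_range] at his; omega
        have hilt : i < m + k + 1 := Finset.mem_range.mp hit
        have hcz : c (i + 1) = 0 := by
          have : i + 1 = n + (i - m) := by omega
          rw [this]
          exact hdisj n hnL (i - m) (by omega)
        simp [hf_def, hcz]
    -- u m * x = A + u m * T
    have hux : (u m : ℝ) * x = (A : ℝ) + (u m : ℝ) * T := by
      rw [hsum, ← hsplit, mul_add, hA]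
    -- distance to the integer A
    have hround := round_le ((u m : ℝ) * x) (A : ℤ)
    have hdist : |(u m : ℝ) * x - ((A : ℤ) : ℝ)| = (u m : ℝ) * T := by
      rw [hux]
      push_cast
      rw [abs_of_nonneg]
      · ring
      · have : (0 : ℝ) ≤ (u m : ℝ) * T := mul_nonneg (le_of_lt (hupos' m)) hT0
        linarith
    have humT : (u m : ℝ) * T ≤ 1 / (b (n + k) : ℝ) := by
      have hnk : n + k = m + k + 1 := by omega
      rw [hnk]
      have hbu : (u (m + k + 1) : ℝ) = (b (m + k + 1) : ℝ) * (u (m + k) : ℝ) := by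
        exact_mod_cast hb (m + k)
      have hbpos : (0 : ℝ) < (b (m + k + 1) : ℝ) := by
        have := hb2 (m + k); exact_mod_cast by omega
      have hmono : (u m : ℝ) ≤ (u (m + k) : ℝ) := by
        exact_mod_cast humono.monotone (by omega : m ≤ m + k)
      calc (u m : ℝ) * T ≤ (u m : ℝ) * (1 / (u (m + k + 1) : ℝ)) :=
            mul_le_mul_of_nonneg_left hTle (le_of_lt (hupos' m))
        _ ≤ 1 / (b (m + k + 1) : ℝ) := by
            rw [mul_one_div, div_le_div_iff₀ (hupos' (m + k + 1)) hbpos, hbu]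
            nlinarith [hupos' m, hupos' (m + k)]
    have : (u (n - 1) : ℝ) = (u m : ℝ) := by rw [hm_def]
    rw [this]
    calc |(u m : ℝ) * x - (round ((u m : ℝ) * x) : ℝ)|
        ≤ |(u m : ℝ) * x - ((A : ℤ) : ℝ)| := hround
      _ = (u m : ℝ) * T := hdist
      _ ≤ 1 / (b (n + k) : ℝ) := humT
  -- conclude by squeeze
  have hb0 : Tendsto (fun n : ℕ => 1 / (b (n + k) : ℝ)) (atTop ⊓ 𝓟 L) (nhds 0) := by
    have h1 : Tendsto (fun n : ℕ => ((b (n + k) : ℝ))) (atTop ⊓ 𝓟 L) atTop :=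
      tendsto_natCast_atTop_atTop.comp hdiv
    exact h1.inv_tendsto_atTop.congr fun n => by simp [one_div, Pi.inv_apply]
  exact squeeze_zero' (Eventually.of_forall (fun n => abs_nonneg _)) key hb0
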